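/- Let Ω be a nonempty finite type equipped with a probability measure μ, and let y, z, e : Ω → {0,1} be random variables satisfying: μ(z = 1) = μ(z = 0) = 1/2; all four events {z = v, e = j} (v, j ∈ {0,1}) have positive probability; μ(y = 1 | z = 0, e = 1) = 1/10, μ(y = 1 | z = 0, e = 0) = 2/10, μ(y = 1 | z = 1, e = 1) = 9/10, μ(y = 1 | z = 1, e = 0) = 8/10. Define the alternative environment partition e′ : Ω → {0,1} by e′ = 1 iff y = z. Then the four events {z = v, e′ = j} (v, j ∈ {0,1}) have positive probability, and the sufficiency gap of the color classifier S = z with respect to e′ equals 1, which is strictly larger than its sufficiency gap 1/10 with respect to the handcrafted environments e. -/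

import Mathlib

open MeasureTheory

/-- Conditional expectation of a `{0,1}`-valued random variable `y` given an event `A`:
`E[y | A] := μ({y = 1} ∩ A) / μ(A)`.  For `{0,1}`-valued `y` this coincides with the
conditional probability `μ(y = 1 | A)`. -/
noncomputable def cexp {Ω : Type*} [MeasurableSpace Ω] (μ : Measure Ω)
    (y : Ω → Fin 2) (A : Set Ω) : ℝ :=
  (μ ({ω | y ω = 1} ∩ A)).toReal / (μ A).toReal

/-- The sufficiency gap of the classifier `z` with respect to environments `e`. -/
noncomputable def gap {Ω : Type*} [MeasurableSpace Ω] (μ : Measure Ω)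
    (y z e : Ω → Fin 2) : ℝ :=
  ∑ v : Fin 2, (μ {ω | z ω = v}).toReal *
    |cexp μ y {ω | z ω = v ∧ e ω = 1} - cexp μ y {ω | z ω = v ∧ e ω = 0}|

lemma fin2_cases (a : Fin 2) : a = 0 ∨ a = 1 := by omega

lemma cexp_num_pos {Ω : Type*} [MeasurableSpace Ω] (μ : Measure Ω)
    (y : Ω → Fin 2) (A : Set Ω) (hc : 0 < cexp μ y A) :
    0 < μ ({ω | y ω = 1} ∩ A) := by
  by_contra h
  push_neg at h
  have h0 : μ ({ω | y ω = 1} ∩ A) = 0 := le_antisymm h zero_le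
  simp [cexp, h0] at hc

lemma cexp_compl_pos {Ω : Type*} [MeasurableSpace Ω] (μ : Measure Ω)
    [IsFiniteMeasure μ]
    (y : Ω → Fin 2) (A : Set Ω) (hA : 0 < μ A) (hc : cexp μ y A < 1) :
    0 < μ ({ω | y ω ≠ 1} ∩ A) := by
  by_contra h
  push_neg at h
  have h0 : μ ({ω | y ω ≠ 1} ∩ A) = 0 := le_antisymm h zero_le
  have hsub : A ⊆ ({ω | y ω = 1} ∩ A) ∪ ({ω | y ω ≠ 1} ∩ A) := by
    intro ω hω
    by_cases hy : y ω = 1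
    · exact Or.inl ⟨hy, hω⟩
    · exact Or.inr ⟨hy, hω⟩
  have hle : μ A ≤ μ ({ω | y ω = 1} ∩ A) := by
    calc μ A ≤ μ (({ω | y ω = 1} ∩ A) ∪ ({ω | y ω ≠ 1} ∩ A)) := measure_mono hsub
      _ ≤ μ ({ω | y ω = 1} ∩ A) + μ ({ω | y ω ≠ 1} ∩ A) := measure_union_le _ _
      _ = μ ({ω | y ω = 1} ∩ A) := by rw [h0, add_zero]
  have hAt : 0 < (μ A).toReal := ENNReal.toReal_pos hA.ne' (measure_ne_top μ A)
  have h1 : (1:ℝ) ≤ cexp μ y A := by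
    rw [cexp, le_div_iff₀ hAt, one_mul]
    exact ENNReal.toReal_mono (measure_ne_top μ _) hle
  linarith

theorem stmt9 {Ω : Type*} [Fintype Ω] [Nonempty Ω] [MeasurableSpace Ω]
    (μ : Measure Ω) [IsProbabilityMeasure μ]
    (y z e e' : Ω → Fin 2)
    (hz1 : μ {ω | z ω = 1} = 1 / 2) (hz0 : μ {ω | z ω = 0} = 1 / 2)
    (hpos : ∀ v j : Fin 2, 0 < μ {ω | z ω = v ∧ e ω = j})
    (h01 : cexp μ y {ω | z ω = 0 ∧ e ω = 1} = 1 / 10)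
    (h00 : cexp μ y {ω | z ω = 0 ∧ e ω = 0} = 2 / 10)
    (h11 : cexp μ y {ω | z ω = 1 ∧ e ω = 1} = 9 / 10)
    (h10 : cexp μ y {ω | z ω = 1 ∧ e ω = 0} = 8 / 10)
    (he' : ∀ ω, e' ω = if y ω = z ω then 1 else 0) :
    (∀ v j : Fin 2, 0 < μ {ω | z ω = v ∧ e' ω = j}) ∧
    gap μ y z e' = 1 ∧ gap μ y z e = 1 / 10 ∧ gap μ y z e < gap μ y z e' := by
  -- set identities for the new environments
  have hS01 : {ω | z ω = 0 ∧ e' ω = 1} = {ω | z ω = 0 ∧ y ω = 0} := by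
    ext ω
    rcases fin2_cases (y ω) with hy | hy <;> rcases fin2_cases (z ω) with hz | hz <;>
      simp [he', hy, hz]
  have hS00 : {ω | z ω = 0 ∧ e' ω = 0} = {ω | z ω = 0 ∧ y ω = 1} := by
    ext ω
    rcases fin2_cases (y ω) with hy | hy <;> rcases fin2_cases (z ω) with hz | hz <;>
      simp [he', hy, hz]
  have hS11 : {ω | z ω = 1 ∧ e' ω = 1} = {ω | z ω = 1 ∧ y ω = 1} := by
    ext ω
    rcases fin2_cases (y ω) with hy | hy <;> rcases fin2_cases (z ω) with hz | hz <;>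
      simp [he', hy, hz]
  have hS10 : {ω | z ω = 1 ∧ e' ω = 0} = {ω | z ω = 1 ∧ y ω = 0} := by
    ext ω
    rcases fin2_cases (y ω) with hy | hy <;> rcases fin2_cases (z ω) with hz | hz <;>
      simp [he', hy, hz]
  -- positivity of the four new events
  have hp01 : 0 < μ {ω | z ω = 0 ∧ y ω = 0} := by
    refine lt_of_lt_of_le
      (cexp_compl_pos μ y {ω | z ω = 0 ∧ e ω = 1} (hpos 0 1) (by rw [h01]; norm_num))
      (measure_mono ?_)
    rintro ω ⟨hy, hz, _⟩
    rcases fin2_cases (y ω) with h | h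
    · exact ⟨hz, h⟩
    · exact absurd h hy
  have hp00 : 0 < μ {ω | z ω = 0 ∧ y ω = 1} := by
    refine lt_of_lt_of_le
      (cexp_num_pos μ y {ω | z ω = 0 ∧ e ω = 1} (by rw [h01]; norm_num))
      (measure_mono ?_)
    rintro ω ⟨hy, hz, _⟩
    exact ⟨hz, hy⟩
  have hp11 : 0 < μ {ω | z ω = 1 ∧ y ω = 1} := by
    refine lt_of_lt_of_le
      (cexp_num_pos μ y {ω | z ω = 1 ∧ e ω = 1} (by rw [h11]; norm_num))
      (measure_mono ?_)
    rintro ω ⟨hy, hz, _⟩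
    exact ⟨hz, hy⟩
  have hp10 : 0 < μ {ω | z ω = 1 ∧ y ω = 0} := by
    refine lt_of_lt_of_le
      (cexp_compl_pos μ y {ω | z ω = 1 ∧ e ω = 1} (hpos 1 1) (by rw [h11]; norm_num))
      (measure_mono ?_)
    rintro ω ⟨hy, hz, _⟩
    rcases fin2_cases (y ω) with h | h
    · exact ⟨hz, h⟩
    · exact absurd h hy
  -- conditional expectations for the new environments
  have hc01 : cexp μ y {ω | z ω = 0 ∧ y ω = 0} = 0 := by
    have hempty : {ω | y ω = 1} ∩ {ω | z ω = 0 ∧ y ω = 0} = ∅ := by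
      ext ω
      simp only [Set.mem_inter_iff, Set.mem_setOf_eq, Set.mem_empty_iff_false, iff_false]
      rintro ⟨h1, _, h2⟩
      rw [h1] at h2
      exact absurd h2 (by decide)
    simp [cexp, hempty]
  have hc00 : cexp μ y {ω | z ω = 0 ∧ y ω = 1} = 1 := by
    have hfull : {ω | y ω = 1} ∩ {ω | z ω = 0 ∧ y ω = 1} = {ω | z ω = 0 ∧ y ω = 1} := by
      ext ω
      simp only [Set.mem_inter_iff, Set.mem_setOf_eq]
      tauto
    rw [cexp, hfull, div_self
      (ENNReal.toReal_pos hp00.ne' (measure_ne_top μ _)).ne']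
  have hc11 : cexp μ y {ω | z ω = 1 ∧ y ω = 1} = 1 := by
    have hfull : {ω | y ω = 1} ∩ {ω | z ω = 1 ∧ y ω = 1} = {ω | z ω = 1 ∧ y ω = 1} := by
      ext ω
      simp only [Set.mem_inter_iff, Set.mem_setOf_eq]
      tauto
    rw [cexp, hfull, div_self
      (ENNReal.toReal_pos hp11.ne' (measure_ne_top μ _)).ne']
  have hc10 : cexp μ y {ω | z ω = 1 ∧ y ω = 0} = 0 := by
    have hempty : {ω | y ω = 1} ∩ {ω | z ω = 1 ∧ y ω = 0} = ∅ := by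
      ext ω
      simp only [Set.mem_inter_iff, Set.mem_setOf_eq, Set.mem_empty_iff_false, iff_false]
      rintro ⟨h1, _, h2⟩
      rw [h1] at h2
      exact absurd h2 (by decide)
    simp [cexp, hempty]
  have hz0t : (μ {ω | z ω = 0}).toReal = 1 / 2 := by
    rw [hz0]; simp [ENNReal.toReal_div]
  have hz1t : (μ {ω | z ω = 1}).toReal = 1 / 2 := by
    rw [hz1]; simp [ENNReal.toReal_div]
  have hgap' : gap μ y z e' = 1 := by
    rw [gap, Fin.sum_univ_two, hS01, hS00, hS11, hS10, hc01, hc00, hc11, hc10,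
      hz0t, hz1t]
    norm_num
  have hgap : gap μ y z e = 1 / 10 := by
    rw [gap, Fin.sum_univ_two, h01, h00, h11, h10, hz0t, hz1t]
    rw [show |(1:ℝ)/10 - 2/10| = 1/10 by rw [abs_sub_comm]; rw [abs_of_nonneg] <;> norm_num,
      show |(9:ℝ)/10 - 8/10| = 1/10 by rw [abs_of_nonneg] <;> norm_num]
    norm_num
  refine ⟨?_, hgap', hgap, by rw [hgap, hgap']; norm_num⟩
  intro v j
  rcases fin2_cases v with hv | hv <;> rcases fin2_cases j with hj | hj <;> subst hv <;>
    subst hj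
  · rw [hS00]; exact hp00
  · rw [hS01]; exact hp01
  · rw [hS10]; exact hp10
  · rw [hS11]; exact hp11
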